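/- Let M be a type, let B and L be disjoint subsets of M, and let 𝒟 be a nonempty collection of finite subsets of M with some element disjoint from L. With dB, dBL, dB' as in the depth setup (minima of |D ∩ B| over 𝒟, of |D ∩ (B ∪ L)| over 𝒟, and of |D ∩ B| over disks disjoint from L, respectively), one has: dBL = 1 and 1 ≤ dB implies dB' = 1, and conversely dB' = 1 together with 1 ≤ dB implies dBL = 1. -/
import Mathlib


theorem stmt_5 {M : Type*} (B L : Set M) (hBL : Disjoint B L)
    (𝒟 : Set (Finset M)) (h𝒟 : 𝒟.Nonempty)
    (hex : ∃ D ∈ 𝒟, (D : Set M) ∩ L = ∅)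
    (dB dBL dB' : ℕ)
    (hdB : dB = sInf {n : ℕ | ∃ D ∈ 𝒟, ((D : Set M) ∩ B).ncard = n})
    (hdBL : dBL = sInf {n : ℕ | ∃ D ∈ 𝒟, ((D : Set M) ∩ (B ∪ L)).ncard = n})
    (hdB' : dB' = sInf {n : ℕ | ∃ D ∈ 𝒟, (D : Set M) ∩ L = ∅ ∧ ((D : Set M) ∩ B).ncard = n}) :
    (dBL = 1 → 1 ≤ dB → dB' = 1) ∧ (dB' = 1 → 1 ≤ dB → dBL = 1) := by
  -- basic facts
  have hfin : ∀ D : Finset M, ∀ S : Set M, ((D : Set M) ∩ S).Finite :=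
    fun D S => D.finite_toSet.inter_of_left S
  have hsplit : ∀ D : Finset M,
      ((D : Set M) ∩ (B ∪ L)).ncard = ((D : Set M) ∩ B).ncard + ((D : Set M) ∩ L).ncard := by
    intro D
    rw [Set.inter_union_distrib_left]
    exact Set.ncard_union_eq (hBL.mono Set.inter_subset_right Set.inter_subset_right)
      (hfin D B) (hfin D L)
  -- lower bound: every element of the dB set is ≥ dB
  have hdBle : ∀ D ∈ 𝒟, dB ≤ ((D : Set M) ∩ B).ncard := by
    intro D hD
    rw [hdB]
    exact Nat.sInf_le ⟨D, hD, rfl⟩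
  constructor
  · intro h1 hge
    -- get D achieving dBL
    have hne : {n : ℕ | ∃ D ∈ 𝒟, ((D : Set M) ∩ (B ∪ L)).ncard = n}.Nonempty := by
      obtain ⟨D, hD⟩ := h𝒟
      exact ⟨_, D, hD, rfl⟩
    have hmem := Nat.sInf_mem hne
    rw [← hdBL, h1] at hmem
    obtain ⟨D, hD, hcard⟩ := hmem
    rw [hsplit D] at hcard
    have hB1 : ((D : Set M) ∩ B).ncard = 1 := by
      have := hdBle D hD
      omega
    have hL0 : ((D : Set M) ∩ L).ncard = 0 := by omega
    have hLempty : (D : Set M) ∩ L = ∅ := by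
      have := (Set.ncard_eq_zero (hfin D L)).mp hL0
      exact this
    have hle : dB' ≤ 1 := by
      rw [hdB']
      exact Nat.sInf_le ⟨D, hD, hLempty, hB1⟩
    have hge' : 1 ≤ dB' := by
      rw [hdB']
      refine le_csInf ⟨1, D, hD, hLempty, hB1⟩ ?_
      rintro n ⟨E, hE, -, rfl⟩
      exact le_trans hge (hdBle E hE)
    omega
  · intro h1 hge
    have hne : {n : ℕ | ∃ D ∈ 𝒟, (D : Set M) ∩ L = ∅ ∧ ((D : Set M) ∩ B).ncard = n}.Nonempty := by
      obtain ⟨D, hD, hDL⟩ := hex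
      exact ⟨_, D, hD, hDL, rfl⟩
    have hmem := Nat.sInf_mem hne
    rw [← hdB', h1] at hmem
    obtain ⟨D, hD, hDL, hB1⟩ := hmem
    have hcard : ((D : Set M) ∩ (B ∪ L)).ncard = 1 := by
      rw [hsplit D, hDL, Set.ncard_empty, hB1]
    have hle : dBL ≤ 1 := by
      rw [hdBL]
      exact Nat.sInf_le ⟨D, hD, hcard⟩
    have hge' : 1 ≤ dBL := by
      rw [hdBL]
      refine le_csInf ⟨1, D, hD, hcard⟩ ?_
      rintro n ⟨E, hE, rfl⟩
      calc 1 ≤ ((E : Set M) ∩ B).ncard := le_trans hge (hdBle E hE)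
        _ ≤ ((E : Set M) ∩ (B ∪ L)).ncard := by rw [hsplit E]; omega
    omega
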